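/- Let {e^{tL}}_{t≥0} be a quantum dynamical semigroup of unital channels on M_d, let P := span{X ∈ M_d : L(X) = iaX for some a ∈ ℝ}, let N := {Y ∈ M_d : e^{tL}(Y) → 0 as t → ∞}, and let π : M_d → M_d be the projection with range P and kernel N (well-defined since M_d = P ⊕ N). Then for every t ≥ 0 the map β_t := e^{tL} − e^{tL} ∘ π takes values in N, and ‖β_t‖ → 0 as t → ∞. -/

import Mathlib

noncomputable section
open scoped Kronecker
open Filter Topology Matrix

/-- `M_d`, the algebra of `d × d` complex matrices. -/
abbrev Md (d : ℕ) := Matrix (Fin d) (Fin d) ℂ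

/-- `Ad_U : X ↦ U* X U` for a unitary `U`. -/
def adU {d : ℕ} (U : Matrix.unitaryGroup (Fin d) ℂ) : Md d →ₗ[ℂ] Md d where
  toFun X := (U : Md d)ᴴ * X * (U : Md d)
  map_add' X Y := by simp [Matrix.mul_add, Matrix.add_mul]
  map_smul' c X := by simp [Matrix.mul_smul, Matrix.smul_mul]

/-- A linear map is completely positive if it has a Kraus decomposition. -/
def IsCP {d : ℕ} (Φ : Md d →ₗ[ℂ] Md d) : Prop :=
  ∃ (n : ℕ) (V : Fin n → Md d), ∀ X, Φ X = ∑ j, (V j)ᴴ * X * (V j)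

def IsUnital {d : ℕ} (Φ : Md d →ₗ[ℂ] Md d) : Prop := Φ 1 = 1

def IsTracePreserving {d : ℕ} (Φ : Md d →ₗ[ℂ] Md d) : Prop :=
  ∀ X, (Φ X).trace = X.trace

def IsHermitianPreserving {d : ℕ} (Φ : Md d →ₗ[ℂ] Md d) : Prop :=
  ∀ X, Φ Xᴴ = (Φ X)ᴴ

/-- A unital quantum channel: CP, unital and trace-preserving. -/
def IsUnitalChannel {d : ℕ} (Φ : Md d →ₗ[ℂ] Md d) : Prop :=
  IsCP Φ ∧ IsUnital Φ ∧ IsTracePreserving Φ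

/-- A mixed unitary channel: a convex combination of unitary conjugations. -/
def IsMixedUnitary {d : ℕ} (Φ : Md d →ₗ[ℂ] Md d) : Prop :=
  ∃ (ℓ : ℕ) (U : Fin ℓ → Matrix.unitaryGroup (Fin d) ℂ) (lam : Fin ℓ → ℝ),
    (∀ j, 0 ≤ lam j) ∧ (∀ j, lam j ≤ 1) ∧ (∑ j, lam j = 1) ∧
    Φ = ∑ j, (lam j : ℂ) • adU (U j)

/-- The Choi matrix `J(Φ) = (1/d) ∑_{i,j} E_{ij} ⊗ Φ(E_{ij})`. -/
def choi {d : ℕ} (Φ : Md d →ₗ[ℂ] Md d) : Matrix (Fin d × Fin d) (Fin d × Fin d) ℂ :=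
  (d : ℂ)⁻¹ • ∑ i : Fin d, ∑ j : Fin d,
    (Matrix.single i j (1 : ℂ)) ⊗ₖ Φ (Matrix.single i j (1 : ℂ))

/-- `⟨Φ, Ψ⟩ = tr(J(Φ)* J(Ψ))`; this is a real number whenever `Φ, Ψ` are
Hermitian-preserving, so we record its real part. -/
def pairRe {d : ℕ} (Φ Ψ : Md d →ₗ[ℂ] Md d) : ℝ := (((choi Φ)ᴴ * choi Ψ).trace).re

/-- The Hilbert–Schmidt (Choi) norm `‖Φ‖₂ = tr(J(Φ)* J(Φ))^{1/2}`. -/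
def hsNorm {d : ℕ} (Φ : Md d →ₗ[ℂ] Md d) : ℝ := Real.sqrt (pairRe Φ Φ)

attribute [local instance] Matrix.normedAddCommGroup Matrix.normedSpace

/-- The exponential `e^{tL}` of a linear map `L` on `M_d`. -/
def expL {d : ℕ} (L : Md d →ₗ[ℂ] Md d) (t : ℝ) : Md d →ₗ[ℂ] Md d :=
  haveI : IsTopologicalRing (Md d →L[ℂ] Md d) :=
    @NonUnitalSeminormedRing.toIsTopologicalRing _
      (ContinuousLinearMap.toNormedRing (𝕜 := ℂ) (E := Md d)).toNonUnitalNormedRing.toNonUnitalSeminormedRing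
  ((NormedSpace.exp ((t : ℂ) • (LinearMap.toContinuousLinearMap L)) :
      Md d →L[ℂ] Md d)).toLinearMap

/-- `P = span{X : L X = i a X for some real a}`. -/
def periphGen {d : ℕ} (L : Md d →ₗ[ℂ] Md d) : Submodule ℂ (Md d) :=
  Submodule.span ℂ {X : Md d | ∃ a : ℝ, L X = ((a : ℂ) * Complex.I) • X}

/-- `N = {Y : e^{tL} Y → 0 as t → ∞}`. -/
def decaySet {d : ℕ} (L : Md d →ₗ[ℂ] Md d) : Set (Md d) :=
  {Y : Md d | Filter.Tendsto (fun t : ℝ => expL L t Y) atTop (nhds 0)}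

section aux
variable {d : ℕ}

attribute [local instance] Matrix.normedAddCommGroup Matrix.normedSpace

set_option synthInstance.maxHeartbeats 1000000 in
lemma expL_add_apply (L : Md d →ₗ[ℂ] Md d) (s t : ℝ) (Y : Md d) :
    expL L (s + t) Y = expL L s (expL L t Y) := by
  have hc : Commute ((s : ℂ) • L.toContinuousLinearMap) ((t : ℂ) • L.toContinuousLinearMap) := by
    show _ = _
    ext x
    simp [ContinuousLinearMap.mul_apply, _root_.map_smul, smul_smul]
    ring
  letI : NormedRing (Md d →L[ℂ] Md d) := ContinuousLinearMap.toNormedRing (𝕜 := ℂ) (E := Md d)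
  letI : NormedAlgebra ℂ (Md d →L[ℂ] Md d) := ContinuousLinearMap.toNormedAlgebra
  letI : NormedAlgebra ℚ (Md d →L[ℂ] Md d) := NormedAlgebra.restrictScalars ℚ ℂ _
  haveI : CompleteSpace (Md d →L[ℂ] Md d) := FiniteDimensional.complete ℂ _
  have hexp := @NormedSpace.exp_add_of_commute _ _ _ this _ _ hc
  have h2 : ((s + t : ℝ) : ℂ) • L.toContinuousLinearMap
      = (s : ℂ) • L.toContinuousLinearMap + (t : ℂ) • L.toContinuousLinearMap := by
    push_cast; exact add_smul (s : ℂ) (t : ℂ) L.toContinuousLinearMap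
  simp only [expL, h2, hexp]
  exact congrArg (fun f : Md d →L[ℂ] Md d => f Y) hexp

/-- Kronecker with a fixed left factor, as a linear map. -/
def kronLeft (A : Md d) : Md d →ₗ[ℂ] Matrix (Fin d × Fin d) (Fin d × Fin d) ℂ where
  toFun M := A ⊗ₖ M
  map_add' M N := Matrix.kronecker_add A M N
  map_smul' c M := Matrix.kronecker_smul c A M

lemma tendsto_kron (A : Md d) {f : ℝ → Md d}
    (hf : Filter.Tendsto f Filter.atTop (nhds 0)) :
    Filter.Tendsto (fun t => A ⊗ₖ f t) Filter.atTop
      (nhds (0 : Matrix (Fin d × Fin d) (Fin d × Fin d) ℂ)) := by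
  have hcont : Continuous (kronLeft A) := (kronLeft A).continuous_of_finiteDimensional
  have h0 : kronLeft A 0 = 0 := map_zero _
  have := (hcont.tendsto 0).comp hf
  rw [h0] at this
  exact this

end aux

/-- let `π` be the projection with range `P` and kernel `N`.  Then
`β_t = e^{tL} - e^{tL} ∘ π` takes values in `N` and `‖β_t‖ → 0` as `t → ∞`. -/
theorem stmt_10 (d : ℕ) (L : Md d →ₗ[ℂ] Md d)
    (h : ∀ t : ℝ, 0 ≤ t → IsUnitalChannel (expL L t))
    (π : Md d →ₗ[ℂ] Md d)
    (hrange : ∀ X, π X ∈ periphGen L)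
    (hfix : ∀ X ∈ periphGen L, π X = X)
    (hker : ∀ X : Md d, π X = 0 ↔ X ∈ decaySet L) :
    (∀ t : ℝ, 0 ≤ t → ∀ X : Md d, expL L t X - expL L t (π X) ∈ decaySet L) ∧
    Filter.Tendsto (fun t : ℝ => hsNorm (expL L t - expL L t ∘ₗ π)) atTop (nhds 0) := by
  classical
  -- every `X - π X` lies in the decay set
  have hdec : ∀ X : Md d, X - π X ∈ decaySet L := by
    intro X
    rw [← hker]
    rw [map_sub, hfix (π X) (hrange X), sub_self]
  have key : ∀ X : Md d, Filter.Tendsto (fun t : ℝ => expL L t X - expL L t (π X))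
      atTop (nhds 0) := by
    intro X
    have := hdec X
    simpa [decaySet, map_sub] using this
  constructor
  · intro t ht X
    have hX := key X
    show Filter.Tendsto (fun s : ℝ => expL L s (expL L t X - expL L t (π X))) atTop (nhds 0)
    have hre : ∀ s : ℝ, expL L s (expL L t X - expL L t (π X))
        = expL L (s + t) X - expL L (s + t) (π X) := by
      intro s
      rw [map_sub, ← expL_add_apply, ← expL_add_apply]
    simp only [hre]
    exact hX.comp (tendsto_atTop_add_const_right atTop t tendsto_id)
  · -- norm convergence
    have hchoi : Filter.Tendsto (fun t : ℝ => choi (expL L t - expL L t ∘ₗ π)) atTop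
        (nhds 0) := by
      have : ∀ t : ℝ, choi (expL L t - expL L t ∘ₗ π)
          = (d : ℂ)⁻¹ • ∑ i : Fin d, ∑ j : Fin d,
              (Matrix.single i j (1 : ℂ)) ⊗ₖ
                (expL L t (Matrix.single i j (1 : ℂ))
                  - expL L t (π (Matrix.single i j (1 : ℂ)))) := by
        intro t
        simp [choi, LinearMap.sub_apply, LinearMap.comp_apply]
      simp only [this]
      have hsum : Filter.Tendsto (fun t : ℝ => ∑ i : Fin d, ∑ j : Fin d,
          (Matrix.single i j (1 : ℂ)) ⊗ₖ
            (expL L t (Matrix.single i j (1 : ℂ))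
              - expL L t (π (Matrix.single i j (1 : ℂ))))) atTop (nhds 0) := by
        have : (0 : Matrix (Fin d × Fin d) (Fin d × Fin d) ℂ)
            = ∑ i : Fin d, ∑ j : Fin d, (0 : Matrix (Fin d × Fin d) (Fin d × Fin d) ℂ) := by
          simp
        rw [this]
        refine tendsto_finset_sum _ fun i _ => tendsto_finset_sum _ fun j _ => ?_
        exact tendsto_kron _ (key _)
      simpa using hsum.const_smul ((d : ℂ)⁻¹)
    have hg : Continuous (fun M : Matrix (Fin d × Fin d) (Fin d × Fin d) ℂ =>
        Real.sqrt (((Mᴴ * M).trace).re)) := by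
      exact Real.continuous_sqrt.comp (Complex.continuous_re.comp
        (((continuous_id.matrix_conjTranspose).matrix_mul continuous_id).matrix_trace))
    have := (hg.tendsto 0).comp hchoi
    simp only [Function.comp_def] at this
    have h0 : Real.sqrt ((((0 : Matrix (Fin d × Fin d) (Fin d × Fin d) ℂ)ᴴ * 0).trace).re)
        = 0 := by simp
    rw [h0] at this
    exact this
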